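/- Theorem (existence of unbeatable ZD strategies): If the stage game is a non-trivial unexploitable finite totally symmetric n-player game, then for every player j there exists a ZD strategy of player j controlling B(a) := s_j(a) - G_j(a); in particular, this strategy unilaterally enforces ⟨s_j⟩* = ⟨G_j⟩* and hence S_j ≥ S_k for all k ≠ j, regardless of the other players' strategies. -/
import Mathlib


open Finset

lemma eraseNonempty {n : ℕ} (hn : 2 ≤ n) (j : Fin n) :
    (Finset.univ.erase j).Nonempty := by
  apply Finset.card_pos.mp
  rw [Finset.card_erase_of_mem (Finset.mem_univ j), Finset.card_univ, Fintype.card_fin]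
  omega

/-- Existence of unbeatable ZD strategies.  In a non-trivial unexploitable finite
totally symmetric game, every player `j` has a memory-one ZD strategy `T` with
non-constant coefficients `c` controlling `B(a) = s_j(a) - G_j(a)`
(`G_j(a) = max_{k≠j} s_k(a)`).  In particular, for every limit distribution
`Pstar` compatible with `T` through Akin's lemma (i.e. arising against arbitrary
strategies of the other players), it enforces `⟨s_j⟩* = ⟨G_j⟩*`, and hence
`S_j ≥ S_k` for every `k ≠ j`. -/
lemma exists_lower {n : ℕ} (hn : 2 ≤ n) {A : Type}
    [Fintype A] [DecidableEq A] [Nonempty A]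
    (s : Fin n → (Fin n → A) → ℝ)
    (hunex : ∀ A' : Finset A, A'.Nonempty → ∃ astar ∈ A',
      ∀ (j : Fin n) (a : Fin n → A), a j = astar → (∀ k, k ≠ j → a k ∈ A') →
        (Finset.univ.erase j).sup' (eraseNonempty hn j) (fun k => s k a) ≤ s j a)
    (j : Fin n) :
    ∀ A' : Finset A, A'.Nonempty → ∃ al ∈ A', ∀ a' : Fin n → A, a' j = al →
      (∀ k, k ≠ j → a' k ∈ A') →
      s j a' ≤ (Finset.univ.erase j).sup' (eraseNonempty hn j) (fun k => s k a') := by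
  intro A'
  induction A' using Finset.strongInduction with
  | _ A' ih =>
    intro hA'
    obtain ⟨astar, hastar_mem, hastar⟩ := hunex A' hA'
    have chain : ∀ (k : Fin n) (a' : Fin n → A), k ≠ j → a' k = astar →
        (∀ l, l ≠ k → a' l ∈ A') →
        s j a' ≤ (Finset.univ.erase j).sup' (eraseNonempty hn j) (fun l => s l a') := by
      intro k a' hkj hk hmem
      have h1 : (Finset.univ.erase k).sup' (eraseNonempty hn k) (fun l => s l a') ≤ s k a' :=
        hastar k a' hk hmem
      have h2 : s j a' ≤ (Finset.univ.erase k).sup' (eraseNonempty hn k) (fun l => s l a') :=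
        Finset.le_sup' (fun l => s l a') (Finset.mem_erase.mpr ⟨Ne.symm hkj, Finset.mem_univ _⟩)
      have h3 : s k a' ≤ (Finset.univ.erase j).sup' (eraseNonempty hn j) (fun l => s l a') :=
        Finset.le_sup' (fun l => s l a') (Finset.mem_erase.mpr ⟨hkj, Finset.mem_univ _⟩)
      linarith
    by_cases h : (A'.erase astar).Nonempty
    · obtain ⟨al, hal_mem, hal⟩ := ih (A'.erase astar) (Finset.erase_ssubset hastar_mem) h
      refine ⟨al, Finset.mem_of_mem_erase hal_mem, ?_⟩
      intro a' haj hmem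
      by_cases hstar : ∃ k, k ≠ j ∧ a' k = astar
      · obtain ⟨k, hkj, hk⟩ := hstar
        refine chain k a' hkj hk ?_
        intro l hl
        by_cases hlj : l = j
        · subst hlj; rw [haj]; exact Finset.mem_of_mem_erase hal_mem
        · exact hmem l hlj
      · push_neg at hstar
        exact hal a' haj (fun k hk => Finset.mem_erase.mpr ⟨hstar k hk, hmem k hk⟩)
    · refine ⟨astar, hastar_mem, ?_⟩
      intro a' haj hmem
      obtain ⟨k, hk⟩ := eraseNonempty hn j
      have hkj : k ≠ j := (Finset.mem_erase.mp hk).1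
      have hka : a' k = astar := by
        by_contra hne
        exact h ⟨a' k, Finset.mem_erase.mpr ⟨hne, hmem k hkj⟩⟩
      refine chain k a' hkj hka ?_
      intro l hl
      by_cases hlj : l = j
      · subst hlj; rw [haj]; exact hastar_mem
      · exact hmem l hlj

theorem unbeatable_zd_of_unexploitable {n : ℕ} (hn : 2 ≤ n) {A : Type}
    [Fintype A] [DecidableEq A] [Nonempty A]
    (s : Fin n → (Fin n → A) → ℝ)
    (hsym : ∀ (π : Equiv.Perm (Fin n)) (j : Fin n) (a : Fin n → A),
      s (π j) a = s j (a ∘ π))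
    (hunex : ∀ A' : Finset A, A'.Nonempty → ∃ astar ∈ A',
      ∀ (j : Fin n) (a : Fin n → A), a j = astar → (∀ k, k ≠ j → a k ∈ A') →
        (Finset.univ.erase j).sup' (eraseNonempty hn j) (fun k => s k a) ≤ s j a)
    (hnontriv : ∃ (k k' : Fin n) (a : Fin n → A), s k a ≠ s k' a) :
    ∀ j : Fin n, ∃ (T : (Fin n → A) → A → ℝ) (c : A → ℝ),
      (∀ a', (∀ x, 0 ≤ T a' x) ∧ ∑ x, T a' x = 1) ∧
      (∃ x y : A, c x ≠ c y) ∧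
      (∀ a' : Fin n → A, ∑ x, c x * (T a' x - (if x = a' j then 1 else 0)) =
        s j a' - (Finset.univ.erase j).sup' (eraseNonempty hn j) (fun k => s k a')) ∧
      (∀ Pstar : (Fin n → A) → ℝ, (∀ a, 0 ≤ Pstar a) → (∑ a, Pstar a = 1) →
        (∀ x : A, ∑ a', Pstar a' * (T a' x - (if x = a' j then 1 else 0)) = 0) →
        (∑ a, Pstar a * s j a =
          ∑ a, Pstar a * (Finset.univ.erase j).sup' (eraseNonempty hn j) (fun k => s k a)) ∧
        ∀ k : Fin n, k ≠ j → ∑ a, Pstar a * s k a ≤ ∑ a, Pstar a * s j a) := by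
  intro j
  -- A is nontrivial
  have hAnt : Nontrivial A := by
    by_contra hsub
    rw [not_nontrivial_iff_subsingleton] at hsub
    obtain ⟨k, k', a, hne⟩ := hnontriv
    have h1 := hsym (Equiv.swap k k') k a
    rw [Equiv.swap_apply_left] at h1
    have h2 : a ∘ (Equiv.swap k k') = a := funext fun x => Subsingleton.elim _ _
    rw [h2] at h1
    exact hne h1.symm
  -- upper action
  obtain ⟨abar, -, habar⟩ := hunex Finset.univ Finset.univ_nonempty
  -- lower action
  have hA'' : (Finset.univ.erase abar).Nonempty := by
    obtain ⟨y, z, hyz⟩ := hAnt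
    by_cases hy : y = abar
    · exact ⟨z, Finset.mem_erase.mpr ⟨by rw [← hy]; exact hyz.symm, Finset.mem_univ _⟩⟩
    · exact ⟨y, Finset.mem_erase.mpr ⟨hy, Finset.mem_univ _⟩⟩
  obtain ⟨al, hal_mem, hal0⟩ := exists_lower hn s hunex j (Finset.univ.erase abar) hA''
  have hne : al ≠ abar := (Finset.mem_erase.mp hal_mem).1
  -- opaque definitions
  obtain ⟨G, hG⟩ : ∃ G : (Fin n → A) → ℝ,
      G = fun a' => (Finset.univ.erase j).sup' (eraseNonempty hn j) (fun k => s k a') :=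
    ⟨_, rfl⟩
  obtain ⟨B, hB⟩ : ∃ B : (Fin n → A) → ℝ, B = fun a' => s j a' - G a' := ⟨_, rfl⟩
  have huniv : (Finset.univ : Finset (Fin n → A)).Nonempty := Finset.univ_nonempty
  obtain ⟨M, hMdef⟩ : ∃ M : ℝ, M = Finset.univ.sup' huniv (fun a' => |B a'|) := ⟨_, rfl⟩
  obtain ⟨c, hc⟩ : ∃ c : A → ℝ,
      c = fun x => if x = al then 2*M+1 else if x = abar then 0 else M + 1/2 := ⟨_, rfl⟩
  obtain ⟨t, ht⟩ : ∃ t : (Fin n → A) → ℝ,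
      t = fun a' => (B a' + c (a' j)) / (2*M+1) := ⟨_, rfl⟩
  obtain ⟨T, hT⟩ : ∃ T : (Fin n → A) → A → ℝ,
      T = fun a' x => t a' * (if x = al then 1 else 0)
        + (1 - t a') * (if x = abar then 1 else 0) := ⟨_, rfl⟩
  -- basic facts
  have hup : ∀ a' : Fin n → A, a' j = abar → G a' ≤ s j a' := by
    intro a' h
    rw [hG]
    exact habar j a' h (fun k _ => Finset.mem_univ _)
  have hlo : ∀ a' : Fin n → A, a' j = al → s j a' ≤ G a' := by
    intro a' ha
    by_cases hstar : ∃ k, k ≠ j ∧ a' k = abar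
    · obtain ⟨k, hkj, hk⟩ := hstar
      have h1 : (Finset.univ.erase k).sup' (eraseNonempty hn k) (fun l => s l a') ≤ s k a' :=
        habar k a' hk (fun l _ => Finset.mem_univ _)
      have h2 : s j a' ≤ (Finset.univ.erase k).sup' (eraseNonempty hn k) (fun l => s l a') :=
        Finset.le_sup' (fun l => s l a') (Finset.mem_erase.mpr ⟨Ne.symm hkj, Finset.mem_univ _⟩)
      have h3 : s k a' ≤ G a' := by
        rw [hG]
        exact Finset.le_sup' (fun l => s l a') (Finset.mem_erase.mpr ⟨hkj, Finset.mem_univ _⟩)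
      linarith
    · push_neg at hstar
      rw [hG]
      exact hal0 a' ha (fun k hk => Finset.mem_erase.mpr ⟨hstar k hk, Finset.mem_univ _⟩)
  have hM : ∀ a', |B a'| ≤ M := by
    intro a'
    rw [hMdef]
    exact Finset.le_sup' (fun a' => |B a'|) (Finset.mem_univ _)
  have hM0 : 0 ≤ M := le_trans (abs_nonneg _) (hM (Classical.arbitrary _))
  have hden : (0:ℝ) < 2*M+1 := by linarith
  have hcal : c al = 2*M+1 := by simp [hc]
  have hcabar : c abar = 0 := by simp [hc, Ne.symm hne]
  -- range of B + c
  have hrange : ∀ a' : Fin n → A, 0 ≤ B a' + c (a' j) ∧ B a' + c (a' j) ≤ 2*M+1 := by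
    intro a'
    have hBb := abs_le.mp (hM a')
    by_cases h1 : a' j = al
    · have hneg : B a' ≤ 0 := by
        rw [hB]
        exact sub_nonpos.mpr (hlo a' h1)
      rw [h1, hcal]
      constructor <;> linarith [hBb.1]
    · by_cases h2 : a' j = abar
      · have hpos : 0 ≤ B a' := by
          rw [hB]
          exact sub_nonneg.mpr (hup a' h2)
        rw [h2, hcabar]
        constructor <;> linarith [hBb.2]
      · have hcx : c (a' j) = M + 1/2 := by simp [hc, h1, h2]
        rw [hcx]
        constructor <;> linarith [hBb.1, hBb.2]
  have ht01 : ∀ a', 0 ≤ t a' ∧ t a' ≤ 1 := by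
    intro a'
    obtain ⟨h1, h2⟩ := hrange a'
    rw [ht]
    exact ⟨div_nonneg h1 hden.le, (div_le_one hden).mpr h2⟩
  have hTsum : ∀ a' x, c x * T a' x = t a' * (if x = al then 2*M+1 else 0) := by
    intro a' x
    by_cases h1 : x = al
    · rw [h1, hcal, if_pos rfl]
      simp only [hT, if_pos rfl, if_true, if_neg hne, mul_one, mul_zero, add_zero]
      ring
    · by_cases h2 : x = abar
      · subst h2
        rw [hcabar, if_neg h1]
        simp only [hT, if_neg h1, if_pos rfl]
        ring
      · have hz : T a' x = 0 := by simp [hT, h1, h2]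
        rw [hz, if_neg h1]
        ring
  have htmul : ∀ a', t a' * (2*M+1) = B a' + c (a' j) := by
    intro a'
    rw [ht]
    exact div_mul_cancel₀ _ (ne_of_gt hden)
  have hzd : ∀ a' : Fin n → A,
      ∑ x, c x * (T a' x - (if x = a' j then 1 else 0)) = B a' := by
    intro a'
    have e : ∀ x : A, c x * (T a' x - (if x = a' j then 1 else 0)) =
        t a' * (if x = al then 2*M+1 else 0) - (if x = a' j then c x else 0) := by
      intro x
      simp only [mul_sub, hTsum a' x, mul_ite, mul_one, mul_zero]
    rw [Finset.sum_congr rfl (fun x _ => e x), Finset.sum_sub_distrib, ← Finset.mul_sum,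
        Finset.sum_ite_eq' Finset.univ al (fun _ => 2*M+1),
        Finset.sum_ite_eq' Finset.univ (a' j) c]
    simp only [Finset.mem_univ, if_true]
    rw [htmul a']
    ring
  refine ⟨T, c, ?_, ⟨al, abar, by rw [hcal, hcabar]; linarith⟩, ?_, ?_⟩
  · -- probability distribution
    intro a'
    obtain ⟨h1, h2⟩ := ht01 a'
    constructor
    · intro x
      have i1 : (0:ℝ) ≤ (if x = al then (1:ℝ) else 0) := by split <;> norm_num
      have i2 : (0:ℝ) ≤ (if x = abar then (1:ℝ) else 0) := by split <;> norm_num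
      rw [hT]
      exact add_nonneg (mul_nonneg h1 i1) (mul_nonneg (by linarith) i2)
    · simp only [hT]
      rw [Finset.sum_add_distrib, ← Finset.mul_sum, ← Finset.mul_sum,
          Finset.sum_ite_eq' Finset.univ al (fun _ => (1:ℝ)),
          Finset.sum_ite_eq' Finset.univ abar (fun _ => (1:ℝ))]
      simp
  · -- the ZD control equation
    intro a'
    rw [hzd a', hB, hG]
  · -- Akin's lemma consequences
    intro Pstar hP0 _ hPa
    have hBzero : ∑ a', Pstar a' * B a' = 0 := by
      calc ∑ a', Pstar a' * B a'
          = ∑ a' : Fin n → A, ∑ x : A,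
              c x * (Pstar a' * (T a' x - (if x = a' j then 1 else 0))) := by
            refine Finset.sum_congr rfl (fun a' _ => ?_)
            rw [← hzd a', Finset.mul_sum]
            exact Finset.sum_congr rfl (fun x _ => by ring)
        _ = ∑ x : A, ∑ a' : Fin n → A,
              c x * (Pstar a' * (T a' x - (if x = a' j then 1 else 0))) := Finset.sum_comm
        _ = ∑ x : A, c x * ∑ a' : Fin n → A,
              Pstar a' * (T a' x - (if x = a' j then 1 else 0)) :=
            Finset.sum_congr rfl (fun x _ => (Finset.mul_sum _ _ _).symm)
        _ = 0 := by simp only [hPa, mul_zero, Finset.sum_const_zero]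
    have heq : ∑ a, Pstar a * s j a - ∑ a, Pstar a * G a = ∑ a', Pstar a' * B a' := by
      rw [← Finset.sum_sub_distrib]
      refine Finset.sum_congr rfl (fun a _ => ?_)
      rw [hB]
      ring
    have heq' : ∑ a, Pstar a *
        (Finset.univ.erase j).sup' (eraseNonempty hn j) (fun k => s k a) =
        ∑ a, Pstar a * G a := by
      refine Finset.sum_congr rfl (fun a _ => ?_)
      rw [hG]
    constructor
    · linarith [hBzero, heq, heq']
    · intro k hkj
      have hle : ∑ a, Pstar a * s k a ≤ ∑ a, Pstar a * G a := by
        refine Finset.sum_le_sum (fun a _ => ?_)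
        refine mul_le_mul_of_nonneg_left ?_ (hP0 a)
        rw [hG]
        exact Finset.le_sup' (fun l => s l a) (Finset.mem_erase.mpr ⟨hkj, Finset.mem_univ _⟩)
      linarith [hBzero, heq, hle]
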